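/- Let μ be a probability measure on a measurable space, h ≥ 0 a measurable function with ∫ h dμ = 1, ν = h·μ, and a > e. Then ν(h > a) ≤ H(ν,μ) / (log a − 1). -/

import Mathlib

open MeasureTheory ENNReal
open scoped Classical

noncomputable section

/-- Relative entropy (Kullback-Leibler information) `H(ν,μ)`:
`∫ log (dν/dμ) dν` if `ν ≪ μ` (and the integral exists), `+∞` otherwise. -/
def relEnt {Ω : Type*} [MeasurableSpace Ω] (ν μ : Measure Ω) : ℝ≥0∞ :=
  if ν ≪ μ ∧ Integrable (fun x => Real.log ((ν.rnDeriv μ) x).toReal) ν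
  then ENNReal.ofReal (∫ x, Real.log ((ν.rnDeriv μ) x).toReal ∂ν)
  else ∞

/-- The measure `ν = h·μ`. -/
def densMeas {Ω : Type*} [MeasurableSpace Ω] (μ : Measure Ω) (h : Ω → ℝ) : Measure Ω :=
  μ.withDensity fun x => ENNReal.ofReal (h x)

/-- The truncated measure `ν_a = (1/ν(h ≤ a)) · h · 1_{h ≤ a} · μ` for `ν = h·μ`. -/
def truncMeas {Ω : Type*} [MeasurableSpace Ω] (μ : Measure Ω) (h : Ω → ℝ) (a : ℝ) : Measure Ω :=
  ((densMeas μ h) {x | h x ≤ a})⁻¹ • (densMeas μ h).restrict {x | h x ≤ a}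

/-- **Lemma 3.3 (2).** For `ν = h·μ` and `a > e`, `ν(h > a) ≤ H(ν,μ)/(log a - 1)`. -/
theorem tail_measure_le_entropy
    {Ω : Type*} [MeasurableSpace Ω] (μ : Measure Ω) (hprob : IsProbabilityMeasure μ)
    (h : Ω → ℝ) (hmeas : Measurable h) (hpos : ∀ x, 0 ≤ h x)
    (hint : IsProbabilityMeasure (densMeas μ h))
    (a : ℝ) (ha : a > Real.exp 1) :
    densMeas μ h {x | a < h x} ≤
      relEnt (densMeas μ h) μ / ENNReal.ofReal (Real.log a - 1) := by
  have hexp : (0:ℝ) < Real.exp 1 := Real.exp_pos 1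
  have ha0 : (0:ℝ) < a := hexp.trans ha
  have hloga : 1 < Real.log a := by
    have := Real.log_lt_log hexp ha
    rwa [Real.log_exp] at this
  have hc0 : ENNReal.ofReal (Real.log a - 1) ≠ 0 := by
    simp only [ne_eq, ENNReal.ofReal_eq_zero, not_le]; linarith
  have hcT : ENNReal.ofReal (Real.log a - 1) ≠ ⊤ := ENNReal.ofReal_ne_top
  set ν := densMeas μ h with hνdef
  by_cases hcase : ν ≪ μ ∧ Integrable (fun x => Real.log ((ν.rnDeriv μ) x).toReal) ν
  · -- main case
    have hmeasE : Measurable fun x => ENNReal.ofReal (h x) :=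
      ENNReal.measurable_ofReal.comp hmeas
    have hνeq : ν = μ.withDensity fun x => ENNReal.ofReal (h x) := rfl
    -- rnDeriv a.e. equality
    have hrnμ : ν.rnDeriv μ =ᵐ[μ] fun x => ENNReal.ofReal (h x) :=
      Measure.rnDeriv_withDensity μ hmeasE
    have hrnν : (fun x => Real.log ((ν.rnDeriv μ) x).toReal)
        =ᵐ[ν] fun x => Real.log (h x) := by
      have : (fun x => Real.log ((ν.rnDeriv μ) x).toReal)
          =ᵐ[μ] fun x => Real.log (h x) := by
        filter_upwards [hrnμ] with x hx
        rw [hx, ENNReal.toReal_ofReal (hpos x)]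
      exact hcase.1.ae_le this
    have hIlogν : Integrable (fun x => Real.log (h x)) ν := hcase.2.congr hrnν
    -- change of measure facts
    have hflt : ∀ᵐ x ∂μ, ENNReal.ofReal (h x) < ⊤ :=
      Filter.Eventually.of_forall fun x => ENNReal.ofReal_lt_top
    have hIφ : Integrable (fun x => Real.log (h x) * h x) μ := by
      have := (integrable_withDensity_iff hmeasE hflt
        (g := fun x => Real.log (h x))).mp hIlogν
      refine this.congr (Filter.Eventually.of_forall fun x => ?_)
      simp only [ENNReal.toReal_ofReal (hpos x)]
    -- h integrable with integral 1
    have hlint : ∫⁻ x, ENNReal.ofReal (h x) ∂μ = 1 := by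
      have := hint.measure_univ
      rwa [hνdef, densMeas, withDensity_apply _ MeasurableSet.univ,
        Measure.restrict_univ] at this
    have hIh : Integrable h μ := by
      have := integrable_toReal_of_lintegral_ne_top hmeasE.aemeasurable
        (by rw [hlint]; exact one_ne_top)
      refine this.congr (Filter.Eventually.of_forall fun x => ?_)
      simp only [ENNReal.toReal_ofReal (hpos x)]
    have hint1 : ∫ x, h x ∂μ = 1 := by
      rw [integral_eq_lintegral_of_nonneg_ae (Filter.Eventually.of_forall hpos)
        hmeas.aestronglyMeasurable, hlint, ENNReal.toReal_one]
    -- the nonnegative function g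
    set g : Ω → ℝ := fun x => h x * Real.log (h x) - h x + 1 with hgdef
    have hg0 : ∀ x, 0 ≤ g x := by
      intro x
      rcases eq_or_lt_of_le (hpos x) with h0 | h0
      · simp [hgdef, ← h0]
      · have := Real.log_le_sub_one_of_pos (x := (h x)⁻¹) (by positivity)
        rw [Real.log_inv] at this
        have h1 : -Real.log (h x) ≤ (h x)⁻¹ - 1 := this
        have h2 : (1 - (h x)⁻¹) * h x ≤ Real.log (h x) * h x := by
          apply mul_le_mul_of_nonneg_right _ (hpos x)
          linarith
        rw [sub_mul, one_mul, inv_mul_cancel₀ (ne_of_gt h0)] at h2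
        simp only [hgdef]
        nlinarith
    have hIg : Integrable g μ := by
      have : Integrable (fun x => h x * Real.log (h x)) μ := by
        refine hIφ.congr (Filter.Eventually.of_forall fun x => mul_comm _ _)
      exact (this.sub hIh).add (integrable_const 1)
    -- the set A
    set A : Set Ω := {x | a < h x} with hAdef
    have hAmeas : MeasurableSet A := measurableSet_lt measurable_const hmeas
    set J : ℝ := ∫ x in A, h x ∂μ with hJdef
    have hJ0 : 0 ≤ J := integral_nonneg fun x => hpos x
    -- ν A = ofReal J
    have hνA : ν A = ENNReal.ofReal J := by
      rw [hνdef, densMeas, withDensity_apply _ hAmeas, hJdef,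
        ofReal_integral_eq_lintegral_ofReal (hIh.restrict)
          (Filter.Eventually.of_forall hpos)]
    -- key real inequality
    have hkey : (Real.log a - 1) * J ≤ ∫ x, Real.log (h x) ∂ν := by
      have hchg : ∫ x, Real.log (h x) ∂ν = ∫ x, Real.log (h x) * h x ∂μ := by
        rw [hνeq]
        have : (fun x => ENNReal.ofReal (h x))
            = fun x => ((fun y => (h y).toNNReal) x : ℝ≥0∞) := rfl
        rw [this, integral_withDensity_eq_integral_smul
          (f := fun y => (h y).toNNReal) (hmeas.real_toNNReal)]
        congr 1
        ext x
        rw [NNReal.smul_def, smul_eq_mul, Real.coe_toNNReal _ (hpos x), mul_comm]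
      rw [hchg]
      have hφ' : Integrable (fun x => h x * Real.log (h x)) μ :=
        hIφ.congr (Filter.Eventually.of_forall fun x => mul_comm _ _)
      have hsplit : ∫ x, Real.log (h x) * h x ∂μ = ∫ x, g x ∂μ := by
        have e1 : ∫ x, (h x * Real.log (h x) - h x + 1) ∂μ
            = (∫ x, (h x * Real.log (h x) - h x) ∂μ) + ∫ _x, (1:ℝ) ∂μ :=
          integral_add (hφ'.sub hIh) (integrable_const 1)
        have e2 : ∫ x, (h x * Real.log (h x) - h x) ∂μ
            = (∫ x, h x * Real.log (h x) ∂μ) - ∫ x, h x ∂μ :=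
          integral_sub hφ' hIh
        have e3 : ∫ x, Real.log (h x) * h x ∂μ = ∫ x, h x * Real.log (h x) ∂μ :=
          integral_congr_ae (Filter.Eventually.of_forall fun x => mul_comm _ _)
        have e4 : ∫ x, g x ∂μ = ∫ x, (h x * Real.log (h x) - h x + 1) ∂μ := rfl
        rw [e3, e4, e1, e2, hint1, integral_const, probReal_univ]
        simp
      rw [hsplit]
      have h1 : ∫ x in A, g x ∂μ ≤ ∫ x, g x ∂μ :=
        setIntegral_le_integral hIg (Filter.Eventually.of_forall hg0)
      have h2 : (Real.log a - 1) * J ≤ ∫ x in A, g x ∂μ := by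
        have : ∫ x in A, (Real.log a - 1) * h x ∂μ ≤ ∫ x in A, g x ∂μ := by
          apply setIntegral_mono_on ((hIh.const_mul _).integrableOn)
            hIg.integrableOn hAmeas
          intro x hx
          have hax : a < h x := hx
          have hx0 : 0 < h x := ha0.trans hax
          have hlog : Real.log a ≤ Real.log (h x) := Real.log_le_log ha0 hax.le
          have : h x * Real.log a ≤ h x * Real.log (h x) :=
            mul_le_mul_of_nonneg_left hlog (hpos x)
          simp only [hgdef]
          nlinarith
        rwa [integral_const_mul] at this
      linarith
    -- wrap up in ENNReal
    rw [relEnt, if_pos hcase, integral_congr_ae hrnν]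
    rw [hνA, ENNReal.le_div_iff_mul_le (Or.inl hc0) (Or.inl hcT),
      ← ENNReal.ofReal_mul hJ0]
    exact ENNReal.ofReal_le_ofReal (by rw [mul_comm]; exact hkey)
  · rw [relEnt, if_neg hcase, ENNReal.top_div_of_ne_top hcT]
    exact le_top

end
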